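/- arXiv:2502.13039 — 3 statements merged into one kernel-verified Lean document; each statement's English description precedes it below -/
import Mathlib

section
/- Let h and n be positive integers with h ≥ 2, let d be a positive integer, and let θ₁, …, θₙ be vectors in ℝ^d that are linearly independent over ℚ. Let ε > 0 be a real number such that ‖∑_{i=1}^n (x_i − y_i) θ_i‖_∞ ≥ ε for all x ≠ y in 𝒳_{h,n}. Let q and m be positive integers with q > 2hm/ε, and let a₁, …, aₙ ∈ ℤ^d be lattice points such that |a_{i,j} − q·θ_{i,j}| ≤ m for all i ∈ [1,n] and j ∈ [1,d]. Then A = {a₁, …, aₙ} is a B_h-set of lattice points in ℤ^d; that is, for all x, y ∈ 𝒳_{h,n}, if ∑_{i=1}^n x_i a_i = ∑_{i=1}^n y_i a_i then x = y. -/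
/-- Construction of `B_h`-sets of lattice points in `ℤ^d` from a
ℚ-linearly independent family of vectors in `ℝ^d`. -/
theorem bh_set_construction_lattice
    (h n d : ℕ) (hh : 2 ≤ h) (hn : 0 < n) (hd : 0 < d)
    (θ : Fin n → (Fin d → ℝ)) (hθ : LinearIndependent ℚ θ)
    (ε : ℝ) (hε : 0 < ε)
    (hsep : ∀ x y : Fin n → ℕ, (∑ i, x i = h) → (∑ i, y i = h) → x ≠ y →
      ε ≤ ‖∑ i, (((x i : ℝ) - (y i : ℝ)) • θ i)‖)
    (q m : ℕ) (hq : 0 < q) (hm : 0 < m)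
    (hqε : (q : ℝ) > 2 * h * m / ε)
    (a : Fin n → (Fin d → ℤ))
    (ha : ∀ i j, |(a i j : ℝ) - (q : ℝ) * θ i j| ≤ m) :
    ∀ x y : Fin n → ℕ, (∑ i, x i = h) → (∑ i, y i = h) →
      (∑ i, x i • a i) = (∑ i, y i • a i) → x = y := by
  intro x y hx hy hsum
  by_contra hxy
  have hsep' := hsep x y hx hy hxy
  set v : Fin d → ℝ := ∑ i, (((x i : ℝ) - (y i : ℝ)) • θ i) with hv
  have hq' : (0:ℝ) < q := by exact_mod_cast hq
  -- coordinate-wise cancellation from hsum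
  have hzero : ∀ j, ∑ i, ((x i : ℝ) - (y i : ℝ)) * (a i j : ℝ) = 0 := by
    intro j
    have hj := congrFun hsum j
    simp only [Finset.sum_apply, Pi.smul_apply, smul_eq_mul] at hj
    have hj' : (∑ i, (x i : ℝ) * (a i j : ℝ)) = ∑ i, (y i : ℝ) * (a i j : ℝ) := by
      exact_mod_cast congrArg (fun z : ℤ => (z : ℝ)) hj
    rw [Finset.sum_congr rfl (fun i _ => sub_mul ((x i : ℝ)) _ _), Finset.sum_sub_distrib,
      hj', sub_self]
  -- bound each coordinate
  have hbound : ∀ j, |v j| < ε := by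
    intro j
    have hvj : v j = ∑ i, ((x i : ℝ) - (y i : ℝ)) * θ i j := by
      simp [hv, Finset.sum_apply]
    have key : (q : ℝ) * v j = ∑ i, ((x i : ℝ) - (y i : ℝ)) * ((q : ℝ) * θ i j - (a i j : ℝ)) := by
      rw [hvj, Finset.mul_sum]
      rw [Finset.sum_congr rfl (fun i _ => by ring_nf :
        ∀ i ∈ Finset.univ, ((x i : ℝ) - y i) * ((q : ℝ) * θ i j - (a i j : ℝ))
          = (q:ℝ) * (((x i : ℝ) - y i) * θ i j) - ((x i : ℝ) - y i) * (a i j : ℝ))]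
      rw [Finset.sum_sub_distrib, hzero j, sub_zero]
    have habs : |(q : ℝ) * v j| ≤ 2 * h * m := by
      rw [key]
      calc |∑ i, ((x i : ℝ) - (y i : ℝ)) * ((q : ℝ) * θ i j - (a i j : ℝ))|
          ≤ ∑ i, |((x i : ℝ) - (y i : ℝ)) * ((q : ℝ) * θ i j - (a i j : ℝ))| :=
            Finset.abs_sum_le_sum_abs _ _
        _ ≤ ∑ i, ((x i : ℝ) + (y i : ℝ)) * m := by
            apply Finset.sum_le_sum
            intro i _
            rw [abs_mul]
            apply mul_le_mul
            · calc |(x i : ℝ) - (y i : ℝ)| ≤ |(x i : ℝ)| + |(y i : ℝ)| := abs_sub _ _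
                _ = (x i : ℝ) + (y i : ℝ) := by
                    rw [abs_of_nonneg (Nat.cast_nonneg _), abs_of_nonneg (Nat.cast_nonneg _)]
            · rw [abs_sub_comm]; exact ha i j
            · exact abs_nonneg _
            · positivity
        _ = 2 * h * m := by
            rw [← Finset.sum_mul, Finset.sum_add_distrib, ← Nat.cast_sum, ← Nat.cast_sum,
              hx, hy]
            ring
    have h2hm : 2 * (h:ℝ) * m < (q:ℝ) * ε := by
      have := (div_lt_iff₀ hε).mp hqε
      linarith
    have : (q:ℝ) * |v j| < (q:ℝ) * ε := by
      calc (q:ℝ) * |v j| = |(q:ℝ) * v j| := by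
            rw [abs_mul, abs_of_pos hq']
        _ ≤ 2 * h * m := habs
        _ < (q:ℝ) * ε := h2hm
    exact lt_of_mul_lt_mul_left this (le_of_lt hq')
  have : ‖v‖ < ε := by
    rw [pi_norm_lt_iff hε]
    intro j
    rw [Real.norm_eq_abs]
    exact hbound j
  linarith
end

section
/- Let h and n be positive integers with h ≥ 2, and let θ₁, …, θₙ be real numbers that are linearly independent over ℚ. Let ε > 0 be a real number such that |∑_{i=1}^n (x_i − y_i) θ_i| ≥ ε for all x ≠ y in 𝒳_{h,n}. Let q and m be positive integers with q > 2hm/ε, and let a₁, …, aₙ be integers such that |a_i − q·θ_i| ≤ m for all i ∈ [1,n]. Then A = {a₁, …, aₙ} is a B_h-set of integers: for all x, y ∈ 𝒳_{h,n}, if ∑_{i=1}^n x_i a_i = ∑_{i=1}^n y_i a_i then x = y; moreover max_{i ∈ [1,n]} |a_i| ≤ q·(max_{i ∈ [1,n]} |θ_i|) + m. -/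
/-- Construction of `B_h`-sets of integers from a ℚ-linearly
independent family of real numbers, together with the size bound
`max_i |a i| ≤ q · (max_i |θ i|) + m`. -/
theorem bh_set_construction_integers
    (h n : ℕ) (hh : 2 ≤ h) (hn : 0 < n)
    (θ : Fin n → ℝ) (hθ : LinearIndependent ℚ θ)
    (ε : ℝ) (hε : 0 < ε)
    (hsep : ∀ x y : Fin n → ℕ, (∑ i, x i = h) → (∑ i, y i = h) → x ≠ y →
      ε ≤ |∑ i, (((x i : ℝ) - (y i : ℝ)) * θ i)|)
    (q m : ℕ) (hq : 0 < q) (hm : 0 < m)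
    (hqε : (q : ℝ) > 2 * h * m / ε)
    (a : Fin n → ℤ)
    (ha : ∀ i, |(a i : ℝ) - (q : ℝ) * θ i| ≤ m) :
    (∀ x y : Fin n → ℕ, (∑ i, x i = h) → (∑ i, y i = h) →
      (∑ i, (x i : ℤ) * a i) = (∑ i, (y i : ℤ) * a i) → x = y) ∧
      (⨆ i, |(a i : ℝ)|) ≤ (q : ℝ) * (⨆ i, |θ i|) + m := by
  have hne : Nonempty (Fin n) := ⟨⟨0, hn⟩⟩
  constructor
  · intro x y hx hy hsum
    by_contra hxy
    have hsep' := hsep x y hx hy hxy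
    set S := ∑ i, (((x i : ℝ) - (y i : ℝ)) * θ i) with hS
    have hsum' : ∑ i, ((x i : ℝ) - (y i : ℝ)) * (a i : ℝ) = 0 := by
      have := congrArg (fun z : ℤ => (z : ℝ)) hsum
      push_cast at this
      simp [sub_mul, Finset.sum_sub_distrib, this]
    have key : (q : ℝ) * S =
        ∑ i, ((x i : ℝ) - (y i : ℝ)) * ((q : ℝ) * θ i - (a i : ℝ)) := by
      have : ∑ i, ((x i : ℝ) - (y i : ℝ)) * ((q : ℝ) * θ i - (a i : ℝ)) =
          (q : ℝ) * S - ∑ i, ((x i : ℝ) - (y i : ℝ)) * (a i : ℝ) := by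
        rw [hS, Finset.mul_sum, ← Finset.sum_sub_distrib]
        exact Finset.sum_congr rfl (fun i _ => by ring)
      rw [this, hsum', sub_zero]
    have hbound : |(q : ℝ) * S| ≤ 2 * h * m := by
      rw [key]
      calc |∑ i, ((x i : ℝ) - (y i : ℝ)) * ((q : ℝ) * θ i - (a i : ℝ))|
          ≤ ∑ i, |((x i : ℝ) - (y i : ℝ)) * ((q : ℝ) * θ i - (a i : ℝ))| :=
            Finset.abs_sum_le_sum_abs _ _
        _ ≤ ∑ i, ((x i : ℝ) + (y i : ℝ)) * m := by
            apply Finset.sum_le_sum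
            intro i _
            rw [abs_mul]
            have h1 : |(x i : ℝ) - (y i : ℝ)| ≤ (x i : ℝ) + (y i : ℝ) := by
              have := abs_sub ((x i : ℝ)) ((y i : ℝ))
              simpa [abs_of_nonneg (Nat.cast_nonneg (x i) : (0:ℝ) ≤ x i),
                abs_of_nonneg (Nat.cast_nonneg (y i) : (0:ℝ) ≤ y i)] using this
            have h2 : |(q : ℝ) * θ i - (a i : ℝ)| ≤ (m : ℝ) := by
              rw [abs_sub_comm]; exact ha i
            exact mul_le_mul h1 h2 (abs_nonneg _)
              (by positivity)
        _ = 2 * h * m := by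
            rw [← Finset.sum_mul, Finset.sum_add_distrib]
            push_cast [← Nat.cast_sum, hx, hy]
            ring
    have hqS : (q : ℝ) * ε ≤ |(q : ℝ) * S| := by
      rw [abs_mul, abs_of_nonneg (by positivity : (0:ℝ) ≤ (q:ℝ))]
      exact mul_le_mul_of_nonneg_left hsep' (by positivity)
    have : 2 * (h : ℝ) * m < (q : ℝ) * ε := (div_lt_iff₀ hε).mp hqε
    linarith
  · have hbdd : BddAbove (Set.range fun i => |θ i|) :=
      (Set.finite_range _).bddAbove
    apply ciSup_le
    intro i
    have h1 : |(a i : ℝ)| ≤ |(a i : ℝ) - (q : ℝ) * θ i| + |(q : ℝ) * θ i| := by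
      have := abs_add_le ((a i : ℝ) - (q : ℝ) * θ i) ((q : ℝ) * θ i)
      simpa using this
    have h2 : |(q : ℝ) * θ i| = (q : ℝ) * |θ i| := by
      rw [abs_mul, abs_of_nonneg (by positivity : (0:ℝ) ≤ (q:ℝ))]
    have h3 : |θ i| ≤ ⨆ j, |θ j| := le_ciSup hbdd i
    have h4 := ha i
    have h5 : (q : ℝ) * |θ i| ≤ (q : ℝ) * ⨆ j, |θ j| :=
      mul_le_mul_of_nonneg_left h3 (by positivity)
    linarith [h1, h2 ▸ h5]
end

section
/- Let n be a positive integer and let θ₁, …, θₙ be positive real numbers that are linearly independent over ℚ. Let g ≥ 2 be an integer, and for each positive integer ℓ and each i ∈ [1,n] let a_{i,ℓ} = ⌊g^ℓ · θ_i⌋ be the integer part of g^ℓ θ_i. Then there exists ℓ₀ = ℓ₀(θ₁,…,θₙ) such that for all ℓ ≥ ℓ₀ the set B(ℓ) = {a_{1,ℓ}, …, a_{n,ℓ}} is a Sidon set of positive integers; that is, for all x, y ∈ 𝒳_{2,n}, if ∑_{i=1}^n x_i a_{i,ℓ} = ∑_{i=1}^n y_i a_{i,ℓ} then x = y. -/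
/-- If `θ 1, …, θ n` are positive reals, ℚ-linearly independent,
and `g ≥ 2`, then for all sufficiently large `ℓ` the integer parts
`⌊g^ℓ θ i⌋` form a Sidon set of positive integers. -/
theorem sidon_set_from_digit_truncation
    (n : ℕ) (hn : 0 < n)
    (θ : Fin n → ℝ) (hpos : ∀ i, 0 < θ i) (hθ : LinearIndependent ℚ θ)
    (g : ℕ) (hg : 2 ≤ g) :
    ∃ ℓ₀ : ℕ, ∀ ℓ : ℕ, ℓ₀ ≤ ℓ →
      (∀ i, 0 < ⌊(g : ℝ) ^ ℓ * θ i⌋) ∧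
      (∀ x y : Fin n → ℕ, (∑ i, x i = 2) → (∑ i, y i = 2) →
        (∑ i, (x i : ℤ) * ⌊(g : ℝ) ^ ℓ * θ i⌋) =
          (∑ i, (y i : ℤ) * ⌊(g : ℝ) ^ ℓ * θ i⌋) → x = y) := by
  classical
  have : Nonempty (Fin n) := ⟨⟨0, hn⟩⟩
  -- ℚ-independence kills integer-vector relations
  have hD : ∀ x y : Fin n → ℕ, x ≠ y →
      (∑ i, ((x i : ℝ) - (y i : ℝ)) * θ i) ≠ 0 := by
    intro x y hxy h0
    apply hxy
    funext i
    have hzero := Fintype.linearIndependent_iff.mp hθ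
        (fun i => (x i : ℚ) - (y i : ℚ)) ?_ i
    · have : ((x i : ℚ)) = (y i : ℚ) := by
        have := sub_eq_zero.mp hzero
        exact_mod_cast this
      exact_mod_cast this
    · calc (∑ i, ((x i : ℚ) - (y i : ℚ)) • θ i)
          = ∑ i, ((x i : ℝ) - (y i : ℝ)) * θ i := by
            refine Finset.sum_congr rfl fun i _ => ?_
            rw [Rat.smul_def]; push_cast; ring
        _ = 0 := h0
  -- finite set of admissible vectors
  set S : Finset (Fin n → ℕ) :=
    Finset.image (fun v : Fin n → Fin 3 => fun i => (v i : ℕ)) Finset.univ with hSdef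
  have hS : ∀ x : Fin n → ℕ, (∑ i, x i = 2) → x ∈ S := by
    intro x hx
    have hb : ∀ i, x i < 3 := by
      intro i
      have : x i ≤ ∑ j, x j :=
        Finset.single_le_sum (fun j _ => Nat.zero_le _) (Finset.mem_univ i)
      omega
    exact Finset.mem_image.mpr ⟨fun i => ⟨x i, hb i⟩, Finset.mem_univ _, rfl⟩
  set P : Finset ((Fin n → ℕ) × (Fin n → ℕ)) :=
    (S ×ˢ S).filter (fun p => p.1 ≠ p.2) with hPdef
  set F : Finset ℝ :=
    insert (1:ℝ) (P.image (fun p => |∑ i, ((p.1 i : ℝ) - (p.2 i : ℝ)) * θ i|)) with hFdef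
  have hFne : F.Nonempty := ⟨1, Finset.mem_insert_self _ _⟩
  set m : ℝ := F.min' hFne with hmdef
  have hm0 : 0 < m := by
    rcases Finset.mem_insert.mp (F.min'_mem hFne) with h1 | h2
    · rw [hmdef, h1]; norm_num
    · obtain ⟨p, hp, hpm⟩ := Finset.mem_image.mp h2
      have hne : p.1 ≠ p.2 := (Finset.mem_filter.mp hp).2
      rw [hmdef, ← hpm]
      exact abs_pos.mpr (hD p.1 p.2 hne)
  -- min of θ
  set t : ℝ := Finset.univ.inf' Finset.univ_nonempty θ with htdef
  have ht0 : 0 < t := by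
    obtain ⟨i, _, hi⟩ := Finset.exists_mem_eq_inf' Finset.univ_nonempty θ
    rw [htdef, hi]; exact hpos i
  have htle : ∀ i, t ≤ θ i := fun i => Finset.inf'_le θ (Finset.mem_univ i)
  -- choose ℓ₀
  have hg1 : (1:ℝ) < (g:ℝ) := by exact_mod_cast Nat.lt_of_lt_of_le one_lt_two hg
  obtain ⟨N, hN⟩ := pow_unbounded_of_one_lt (max (2/m) (1/t)) hg1
  refine ⟨N, fun ℓ hℓ => ?_⟩
  have hgl : max (2/m) (1/t) < (g:ℝ)^ℓ :=
    hN.trans_le (pow_le_pow_right₀ (le_of_lt hg1) hℓ)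
  have hgl0 : 0 < (g:ℝ)^ℓ := by positivity
  constructor
  · intro i
    have h1 : (1:ℝ) ≤ (g:ℝ)^ℓ * θ i := by
      have h2 : 1/t < (g:ℝ)^ℓ := lt_of_le_of_lt (le_max_right _ _) hgl
      have h3 : (1:ℝ) < (g:ℝ)^ℓ * t := by
        rw [div_lt_iff₀ ht0] at h2; linarith
      have := mul_le_mul_of_nonneg_left (htle i) (le_of_lt hgl0)
      linarith
    exact_mod_cast Int.le_floor.mpr (by exact_mod_cast h1 : ((1:ℤ):ℝ) ≤ (g:ℝ)^ℓ * θ i)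
  · intro x y hx hy heq
    by_contra hxy
    -- the key nonzero quantity
    set δ : ℝ := ∑ i, ((x i : ℝ) - (y i : ℝ)) * θ i with hδdef
    have hδ0 : δ ≠ 0 := hD x y hxy
    have hmem : (x, y) ∈ P := by
      rw [hPdef, Finset.mem_filter]
      exact ⟨Finset.mem_product.mpr ⟨hS x hx, hS y hy⟩, hxy⟩
    have hmδ : m ≤ |δ| := by
      rw [hmdef]
      exact Finset.min'_le F _ (Finset.mem_insert_of_mem
        (Finset.mem_image.mpr ⟨(x, y), hmem, rfl⟩))
    -- floor bounds
    have hbound : ∀ z : Fin n → ℕ, (∑ i, z i = 2) →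
        ((g:ℝ)^ℓ * (∑ i, (z i : ℝ) * θ i) - 2 ≤
          ((∑ i, (z i : ℤ) * ⌊(g:ℝ)^ℓ * θ i⌋ : ℤ) : ℝ)) ∧
        (((∑ i, (z i : ℤ) * ⌊(g:ℝ)^ℓ * θ i⌋ : ℤ) : ℝ) ≤
          (g:ℝ)^ℓ * (∑ i, (z i : ℝ) * θ i)) := by
      intro z hz
      have hcast : ((∑ i, (z i : ℤ) * ⌊(g:ℝ)^ℓ * θ i⌋ : ℤ) : ℝ)
          = ∑ i, (z i : ℝ) * (⌊(g:ℝ)^ℓ * θ i⌋ : ℝ) := by push_cast; ring_nf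
      have hsum2 : (∑ i, (z i : ℝ)) = 2 := by exact_mod_cast hz
      have hexp : (g:ℝ)^ℓ * (∑ i, (z i : ℝ) * θ i)
          = ∑ i, (z i : ℝ) * ((g:ℝ)^ℓ * θ i) := by
        rw [Finset.mul_sum]; refine Finset.sum_congr rfl fun i _ => by ring
      constructor
      · rw [hcast, hexp]
        have : ∑ i, (z i : ℝ) * ((g:ℝ)^ℓ * θ i) - 2
            = ∑ i, (z i : ℝ) * ((g:ℝ)^ℓ * θ i - 1) := by
          rw [← hsum2, ← Finset.sum_sub_distrib]
          refine Finset.sum_congr rfl fun i _ => by ring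
        rw [this]
        refine Finset.sum_le_sum fun i _ => ?_
        exact mul_le_mul_of_nonneg_left (le_of_lt (Int.sub_one_lt_floor _))
          (Nat.cast_nonneg _)
      · rw [hcast, hexp]
        refine Finset.sum_le_sum fun i _ => ?_
        exact mul_le_mul_of_nonneg_left (Int.floor_le _) (Nat.cast_nonneg _)
    obtain ⟨hx1, hx2⟩ := hbound x hx
    obtain ⟨hy1, hy2⟩ := hbound y hy
    have heqR : ((∑ i, (x i : ℤ) * ⌊(g:ℝ)^ℓ * θ i⌋ : ℤ) : ℝ)
        = ((∑ i, (y i : ℤ) * ⌊(g:ℝ)^ℓ * θ i⌋ : ℤ) : ℝ) := by exact_mod_cast heq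
    have hdiff : (g:ℝ)^ℓ * (∑ i, (x i : ℝ) * θ i) - (g:ℝ)^ℓ * (∑ i, (y i : ℝ) * θ i)
        = (g:ℝ)^ℓ * δ := by
      rw [hδdef, Finset.mul_sum, Finset.mul_sum, Finset.mul_sum,
        ← Finset.sum_sub_distrib]
      exact Finset.sum_congr rfl fun i _ => by ring
    have habs : |(g:ℝ)^ℓ * δ| ≤ 2 := by
      rw [← hdiff, abs_le]
      constructor <;> linarith
    have h2m : 2 < (g:ℝ)^ℓ * m := by
      have h2 : 2/m < (g:ℝ)^ℓ := lt_of_le_of_lt (le_max_left _ _) hgl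
      rw [div_lt_iff₀ hm0] at h2; linarith
    have : (g:ℝ)^ℓ * m ≤ |(g:ℝ)^ℓ * δ| := by
      rw [abs_mul, abs_of_pos hgl0]
      exact mul_le_mul_of_nonneg_left hmδ (le_of_lt hgl0)
    linarith
end
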